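/- Under CDF-based scheduling, the conditional distribution of a user's SNR given that the user is selected is [F(γ)]^{1/α}, where α = w_i / Σ_j w_j is the user's channel access ratio. Formally, if γ_i has CDF F_i and U_j = F_j(γ_j) are independent uniforms, then Pr{γ_i ≤ γ | U_i^{1/w_i} > U_j^{1/w_j} ∀ j ≠ i} = [F_i(γ)]^{1/α_i}. -/

import Mathlib

open MeasureTheory ProbabilityTheory

section AuxCDFScheduling

open Set Filter Topology

variable {Ω : Type*} [MeasurableSpace Ω] (μ : Measure Ω) [IsProbabilityMeasure μ]
variable {g : Ω → ℝ} {F : ℝ → ℝ}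

lemma auxCDF_surj (hg : Measurable g) (hFm : StrictMono F) (hFc : Continuous F)
    (hcdf : ∀ x, μ {ω | g ω ≤ x} = ENNReal.ofReal (F x)) {u : ℝ}
    (h0 : 0 < u) (h1 : u < 1) : ∃ z, F z = u := by
  -- upper
  have hUmono : Monotone (fun k : ℕ => {ω | g ω ≤ (k : ℝ)}) := by
    intro a b hab ω h
    simp only [mem_setOf_eq] at h ⊢
    exact le_trans h (by exact_mod_cast hab)
  have hUunion : (⋃ k : ℕ, {ω | g ω ≤ (k : ℝ)}) = univ := by
    ext ω
    simp only [mem_iUnion, mem_setOf_eq, mem_univ, iff_true]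
    exact exists_nat_ge (g ω)
  have hU := tendsto_measure_iUnion_atTop (μ := μ) hUmono
  rw [hUunion, measure_univ] at hU
  have hz2 : ∃ z : ℝ, u < F z := by
    by_contra hcon
    push_neg at hcon
    have hle : ∀ k : ℕ, (μ ∘ fun k : ℕ => {ω | g ω ≤ (k : ℝ)}) k ≤ ENNReal.ofReal u := by
      intro k
      simp only [Function.comp_apply, hcdf]
      exact ENNReal.ofReal_le_ofReal (hcon _)
    have := le_of_tendsto hU (Eventually.of_forall hle)
    exact absurd (this.trans_lt (ENNReal.ofReal_lt_one.2 h1)) (lt_irrefl _)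
  -- lower
  have hDanti : Antitone (fun k : ℕ => {ω | g ω ≤ -(k : ℝ)}) := by
    intro a b hab ω h
    simp only [mem_setOf_eq] at h ⊢
    exact le_trans h (neg_le_neg (by exact_mod_cast hab))
  have hDinter : (⋂ k : ℕ, {ω | g ω ≤ -(k : ℝ)}) = ∅ := by
    ext ω
    simp only [mem_iInter, mem_setOf_eq, mem_empty_iff_false, iff_false, not_forall, not_le]
    obtain ⟨k, hk⟩ := exists_nat_gt (-(g ω))
    exact ⟨k, by linarith⟩
  have hD := tendsto_measure_iInter_atTop (μ := μ) (s := fun k : ℕ => {ω | g ω ≤ -(k : ℝ)})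
    (fun k => (measurableSet_le hg measurable_const).nullMeasurableSet) hDanti
    ⟨0, measure_ne_top _ _⟩
  rw [hDinter, measure_empty] at hD
  have hz1 : ∃ z : ℝ, F z < u := by
    by_contra hcon
    push_neg at hcon
    have hle : ∀ k : ℕ, ENNReal.ofReal u ≤ (μ ∘ fun k : ℕ => {ω | g ω ≤ -(k : ℝ)}) k := by
      intro k
      simp only [Function.comp_apply, hcdf]
      exact ENNReal.ofReal_le_ofReal (hcon _)
    have := ge_of_tendsto hD (Eventually.of_forall hle)
    have h0' : (0 : ENNReal) < ENNReal.ofReal u := ENNReal.ofReal_pos.2 h0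
    exact absurd (lt_of_lt_of_le h0' this) (lt_irrefl _)
  obtain ⟨z1, hz1⟩ := hz1
  obtain ⟨z2, hz2⟩ := hz2
  have hz12 : z1 ≤ z2 := by
    by_contra hcon
    push_neg at hcon
    exact absurd ((hFm hcon).trans hz1) (not_lt.2 hz2.le)
  have := intermediate_value_Icc hz12 (hFc.continuousOn (s := Icc z1 z2))
  obtain ⟨z, _, hz⟩ := this ⟨hz1.le, hz2.le⟩
  exact ⟨z, hz⟩

lemma auxCDF_lt (hFc : Continuous F)
    (hcdf : ∀ x, μ {ω | g ω ≤ x} = ENNReal.ofReal (F x)) (z : ℝ) :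
    μ {ω | g ω < z} = ENNReal.ofReal (F z) := by
  have hset : {ω | g ω < z} = ⋃ k : ℕ, {ω | g ω ≤ z - 1 / ((k : ℝ) + 1)} := by
    ext ω
    simp only [mem_setOf_eq, mem_iUnion]
    constructor
    · intro h
      obtain ⟨k, hk⟩ := exists_nat_one_div_lt (sub_pos.2 h)
      exact ⟨k, by linarith⟩
    · rintro ⟨k, hk⟩
      have hpos : 0 < 1 / ((k : ℝ) + 1) := by positivity
      linarith
  have hmono : Monotone (fun k : ℕ => {ω | g ω ≤ z - 1 / ((k : ℝ) + 1)}) := by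
    intro a b hab ω h
    simp only [mem_setOf_eq] at h ⊢
    have h2 : 1 / ((b : ℝ) + 1) ≤ 1 / ((a : ℝ) + 1) := by
      apply one_div_le_one_div_of_le (by positivity)
      exact_mod_cast Nat.add_le_add_right hab 1
    linarith
  have hU := tendsto_measure_iUnion_atTop (μ := μ) hmono
  rw [← hset] at hU
  have hT : Tendsto (fun k : ℕ => z - 1 / ((k : ℝ) + 1)) atTop (𝓝 z) := by
    have := tendsto_one_div_add_atTop_nhds_zero_nat (𝕜 := ℝ)
    simpa using tendsto_const_nhds.sub this
  have hT2 : Tendsto (μ ∘ fun k : ℕ => {ω | g ω ≤ z - 1 / ((k : ℝ) + 1)}) atTop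
      (𝓝 (ENNReal.ofReal (F z))) := by
    have : (μ ∘ fun k : ℕ => {ω | g ω ≤ z - 1 / ((k : ℝ) + 1)}) =
        fun k : ℕ => ENNReal.ofReal (F (z - 1 / ((k : ℝ) + 1))) := by
      ext k; simp [hcdf]
    rw [this]
    exact (ENNReal.continuous_ofReal.tendsto _).comp ((hFc.tendsto z).comp hT)
  exact tendsto_nhds_unique hU hT2

lemma auxCDF_unif_lt (hg : Measurable g) (hFm : StrictMono F) (hFc : Continuous F)
    (hcdf : ∀ x, μ {ω | g ω ≤ x} = ENNReal.ofReal (F x)) {u : ℝ}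
    (h0 : 0 < u) (h1 : u < 1) : μ {ω | F (g ω) < u} = ENNReal.ofReal u := by
  obtain ⟨z, hz⟩ := auxCDF_surj μ hg hFm hFc hcdf h0 h1
  have : {ω | F (g ω) < u} = {ω | g ω < z} := by
    ext ω; simp only [mem_setOf_eq, ← hz, hFm.lt_iff_lt]
  rw [this, auxCDF_lt μ hFc hcdf, hz]

lemma auxCDF_map (hg : Measurable g) (hFm : StrictMono F) (hFc : Continuous F)
    (hF01 : ∀ x, F x ∈ Set.Icc (0 : ℝ) 1)
    (hcdf : ∀ x, μ {ω | g ω ≤ x} = ENNReal.ofReal (F x)) :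
    μ.map (fun ω => F (g ω)) = volume.restrict (Ioo (0 : ℝ) 1) := by
  have hFpos : ∀ x, 0 < F x := fun x =>
    lt_of_le_of_lt (hF01 (x - 1)).1 (hFm (by linarith))
  have hFlt1 : ∀ x, F x < 1 := fun x =>
    lt_of_lt_of_le (hFm (lt_add_one x)) (hF01 (x + 1)).2
  haveI : IsFiniteMeasure (volume.restrict (Ioo (0 : ℝ) 1)) := by
    constructor
    rw [Measure.restrict_apply_univ, Real.volume_Ioo]
    simp
  refine Measure.ext_of_Iic _ _ fun u => ?_
  rw [Measure.map_apply (show Measurable fun ω => F (g ω) from hFc.measurable.comp hg)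
    measurableSet_Iic,
    Measure.restrict_apply measurableSet_Iic]
  rcases le_or_gt u 0 with hu | hu
  · have h1 : (fun ω => F (g ω)) ⁻¹' Iic u = ∅ := by
      ext ω
      simp only [mem_preimage, mem_Iic, mem_empty_iff_false, iff_false, not_le]
      exact lt_of_le_of_lt hu (hFpos _)
    have h2 : Iic u ∩ Ioo (0 : ℝ) 1 = ∅ := by
      ext y
      simp only [mem_inter_iff, mem_Iic, mem_Ioo, mem_empty_iff_false, iff_false, not_and]
      intro hy hy0
      linarith
    rw [h1, h2]
    simp
  rcases lt_or_ge u 1 with hu1 | hu1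
  · obtain ⟨z, hz⟩ := auxCDF_surj μ hg hFm hFc hcdf hu hu1
    have h1 : (fun ω => F (g ω)) ⁻¹' Iic u = {ω | g ω ≤ z} := by
      ext ω
      simp only [mem_preimage, mem_Iic, mem_setOf_eq, ← hz, hFm.le_iff_le]
    have h2 : Iic u ∩ Ioo (0 : ℝ) 1 = Ioc 0 u := by
      ext y
      simp only [mem_inter_iff, mem_Iic, mem_Ioo, mem_Ioc]
      constructor
      · rintro ⟨hy, hy0, _⟩; exact ⟨hy0, hy⟩
      · rintro ⟨hy0, hy⟩; exact ⟨hy, hy0, lt_of_le_of_lt hy hu1⟩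
    rw [h1, h2, hcdf, hz, Real.volume_Ioc, sub_zero]
  · have h1 : (fun ω => F (g ω)) ⁻¹' Iic u = univ := by
      ext ω
      simp only [mem_preimage, mem_Iic, mem_univ, iff_true]
      exact le_trans (hFlt1 _).le hu1
    have h2 : Iic u ∩ Ioo (0 : ℝ) 1 = Ioo 0 1 := by
      ext y
      simp only [mem_inter_iff, mem_Iic, mem_Ioo, and_iff_right_iff_imp]
      rintro ⟨_, hy1⟩
      exact le_trans hy1.le hu1
    rw [h1, h2, measure_univ, Real.volume_Ioo]
    simp

lemma auxIntegral {s c : ℝ} (hs : 0 < s) (hc : 0 < c) (hc1 : c ≤ 1) :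
    ∫⁻ u in Iic c ∩ Ioo (0 : ℝ) 1, ENNReal.ofReal (u ^ (s - 1)) =
      ENNReal.ofReal (c ^ s / s) := by
  have hset : (Iic c ∩ Ioo (0 : ℝ) 1 : Set ℝ) =ᵐ[volume] Ioc (0 : ℝ) c := by
    rw [MeasureTheory.ae_eq_set]
    constructor
    · have hsub : Iic c ∩ Ioo (0 : ℝ) 1 ⊆ Ioc 0 c := by
        intro y hy
        simp only [mem_inter_iff, mem_Iic, mem_Ioo, mem_Ioc] at hy ⊢
        exact ⟨hy.2.1, hy.1⟩
      rw [Set.diff_eq_empty.2 hsub]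
      exact measure_empty
    · refine measure_mono_null (fun y hy => ?_) (Real.volume_singleton (a := 1))
      simp only [mem_diff, mem_inter_iff, mem_Iic, mem_Ioo, mem_Ioc] at hy
      obtain ⟨⟨hy0, hyc⟩, h⟩ := hy
      have h1 : ¬ y < 1 := fun hlt => h ⟨hyc, hy0, hlt⟩
      have : y = 1 := le_antisymm (hyc.trans hc1) (not_lt.1 h1)
      simp [this]
  rw [setLIntegral_congr hset]
  have hInt : IntegrableOn (fun u : ℝ => u ^ (s - 1)) (Ioc 0 c) volume := by
    have := intervalIntegral.intervalIntegrable_rpow' (a := 0) (b := c)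
      (by linarith : (-1 : ℝ) < s - 1)
    rwa [intervalIntegrable_iff_integrableOn_Ioc_of_le hc.le] at this
  rw [← ofReal_integral_eq_lintegral_ofReal hInt]
  · congr 1
    rw [← intervalIntegral.integral_of_le hc.le,
      integral_rpow (Or.inl (by linarith : (-1 : ℝ) < s - 1))]
    have h1 : s - 1 + 1 = s := by ring
    rw [h1, Real.zero_rpow hs.ne']
    ring
  · filter_upwards [ae_restrict_mem measurableSet_Ioc] with u hu
    exact Real.rpow_nonneg hu.1.le _

end AuxCDFScheduling

/-- Under CDF-based scheduling, the conditional SNR distribution of user `i`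
given that it is selected is `[F_i(x)]^(1/α_i)` where `α_i = w_i / ∑ w_j`. -/
theorem cdf_scheduling_selected_snr_distribution {Ω : Type*} [MeasurableSpace Ω]
    (μ : Measure Ω) [IsProbabilityMeasure μ] (n : ℕ)
    (γ : Fin n → Ω → ℝ) (hγmeas : ∀ j, Measurable (γ j))
    (hindep : iIndepFun (m := fun _ => Real.measurableSpace) γ μ)
    (F : Fin n → ℝ → ℝ)
    (hFmono : ∀ j, StrictMono (F j)) (hFcont : ∀ j, Continuous (F j))
    (hF01 : ∀ j x, F j x ∈ Set.Icc (0 : ℝ) 1)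
    (hcdf : ∀ j x, μ {ω | γ j ω ≤ x} = ENNReal.ofReal (F j x))
    (w : Fin n → ℝ) (hw : ∀ j, 0 < w j) (i : Fin n)
    (α : ℝ) (hα : α = w i / ∑ j, w j) :
    ∀ x : ℝ,
      μ ({ω | γ i ω ≤ x} ∩
          {ω | ∀ j, j ≠ i → (F j (γ j ω)) ^ (1 / w j) < (F i (γ i ω)) ^ (1 / w i)}) /
        μ {ω | ∀ j, j ≠ i → (F j (γ j ω)) ^ (1 / w j) < (F i (γ i ω)) ^ (1 / w i)}
      = ENNReal.ofReal ((F i x) ^ (1 / α)) := by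
  classical
  intro x
  set s : ℝ := (∑ j, w j) / w i with hs_def
  have hwi := hw i
  have hwsum : 0 < ∑ j, w j := Finset.sum_pos (fun j _ => hw j) ⟨i, Finset.mem_univ i⟩
  have hs_pos : 0 < s := div_pos hwsum hwi
  have hsinv : 1 / α = s := by
    rw [hα, hs_def]
    field_simp
  have hFpos : ∀ j y, 0 < F j y := fun j y =>
    lt_of_le_of_lt (hF01 j (y - 1)).1 (hFmono j (by linarith))
  have hFlt1 : ∀ j y, F j y < 1 := fun j y =>
    lt_of_lt_of_le (hFmono j (lt_add_one y)) (hF01 j (y + 1)).2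
  -- measures
  set ν : Fin n → Measure ℝ := fun j => μ.map (γ j) with hν
  haveI hprob : ∀ j, IsProbabilityMeasure (ν j) := fun j =>
    Measure.isProbabilityMeasure_map (hγmeas j).aemeasurable
  set T : Finset (Fin n) := {i}ᶜ with hT
  have hmemT : ∀ j : Fin n, j ∈ T ↔ j ≠ i := fun j => by simp [hT]
  haveI : ∀ j : T, IsProbabilityMeasure (ν j) := fun j => hprob j
  -- the joint map
  set Φ : Ω → ℝ × (T → ℝ) := fun ω => (γ i ω, fun j => γ j ω) with hΦ
  have hΦmeas : Measurable Φ :=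
    (hγmeas i).prodMk (measurable_pi_lambda _ fun j => hγmeas j)
  -- independence of γ i from the rest
  have hindep2 : IndepFun (γ i) (fun ω (j : T) => γ j ω) μ := by
    have h := hindep.indepFun_finset {i} T (by simp [hT]) hγmeas
    have h2 := h.comp (measurable_pi_apply
      (⟨i, Finset.mem_singleton_self i⟩ : ({i} : Finset (Fin n)))) measurable_id
    exact h2
  -- law of the (j ≠ i)-tuple is the product measure
  have hTuplemeas : Measurable (fun ω (j : T) => γ j ω) :=
    measurable_pi_lambda _ fun j => hγmeas j
  have hmapT : μ.map (fun ω (j : T) => γ j ω) = Measure.pi (fun j : T => ν j) := by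
    refine (Measure.pi_eq fun A hA => ?_).symm
    rw [Measure.map_apply hTuplemeas (MeasurableSet.univ_pi hA)]
    set sets : Fin n → Set ℝ := fun j => if h : j ∈ T then A ⟨j, h⟩ else Set.univ with hsets
    have hsetsmeas : ∀ j, j ∈ T → MeasurableSet (sets j) := by
      intro j hj
      simp only [hsets]
      rw [dif_pos hj]
      exact hA _
    have h1 : (fun ω (j : T) => γ j ω) ⁻¹' (Set.univ.pi A) = ⋂ j ∈ T, γ j ⁻¹' sets j := by
      ext ω
      simp only [Set.mem_preimage, Set.mem_univ_pi, Set.mem_iInter, hsets]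
      constructor
      · intro h j hj
        rw [dif_pos hj]
        exact h ⟨j, hj⟩
      · intro h j
        have := h j j.2
        rwa [dif_pos j.2] at this
    rw [h1, hindep.measure_inter_preimage_eq_mul T hsetsmeas,
      ← Finset.prod_coe_sort T (fun j => μ (γ j ⁻¹' sets j))]
    refine Finset.prod_congr rfl fun j _ => ?_
    have hj2 : sets (j : Fin n) = A j := by
      simp only [hsets]
      rw [dif_pos j.2]
    rw [hj2, hν, Measure.map_apply (hγmeas _) (hA j)]
  have hmapΦ : μ.map Φ = (ν i).prod (Measure.pi fun j : T => ν j) := by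
    rw [hν, ← hmapT]
    exact (indepFun_iff_map_prod_eq_prod_map_map (hγmeas i).aemeasurable
      hTuplemeas.aemeasurable).1 hindep2
  -- the selection event
  set C : Set (ℝ × (T → ℝ)) :=
    {p | ∀ j : T, (F j (p.2 j)) ^ (1 / w j) < (F i p.1) ^ (1 / w i)} with hC
  have hCmeas : MeasurableSet C := by
    have : C = ⋂ j : T, {p : ℝ × (T → ℝ) |
        (F j (p.2 j)) ^ (1 / w (j : Fin n)) < (F i p.1) ^ (1 / w i)} := by
      ext p
      simp only [hC, Set.mem_setOf_eq, Set.mem_iInter]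
    rw [this]
    refine MeasurableSet.iInter fun j => ?_
    exact measurableSet_lt
      (((hFcont j).measurable.comp ((measurable_pi_apply j).comp measurable_snd)).pow
        measurable_const)
      (((hFcont i).measurable.comp measurable_fst).pow measurable_const)
  have hB : {ω | ∀ j, j ≠ i → (F j (γ j ω)) ^ (1 / w j) < (F i (γ i ω)) ^ (1 / w i)}
      = Φ ⁻¹' C := by
    ext ω
    simp only [Set.mem_setOf_eq, Set.mem_preimage, hC, hΦ]
    constructor
    · intro h j
      exact h j ((hmemT j).1 j.2)
    · intro h j hj
      exact h ⟨j, (hmemT j).2 hj⟩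
  have hA' : {ω | γ i ω ≤ x} = Φ ⁻¹' (Set.Iic x ×ˢ Set.univ) := by
    ext ω
    simp [hΦ]
  -- the master computation
  have master : ∀ (D : Set ℝ) (c : ℝ), MeasurableSet D → 0 < c → c ≤ 1 →
      (∀ t, t ∈ D ↔ F i t ≤ c) →
      μ (Φ ⁻¹' ((D ×ˢ Set.univ) ∩ C)) = ENNReal.ofReal (c ^ s / s) := by
    intro D c hD hc hc1 hDc
    have hSmeas : MeasurableSet ((D ×ˢ (Set.univ : Set (T → ℝ))) ∩ C) :=
      (hD.prod MeasurableSet.univ).inter hCmeas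
    rw [← Measure.map_apply hΦmeas hSmeas, hmapΦ, Measure.prod_apply hSmeas]
    have hslice : ∀ t : ℝ, (Measure.pi fun j : T => ν j)
        (Prod.mk t ⁻¹' ((D ×ˢ Set.univ) ∩ C))
        = Set.indicator D (fun t => ENNReal.ofReal ((F i t) ^ (s - 1))) t := by
      intro t
      by_cases ht : t ∈ D
      · rw [Set.indicator_of_mem ht]
        have h1 : Prod.mk t ⁻¹' ((D ×ˢ Set.univ) ∩ C)
            = Set.univ.pi (fun j : T => {y | F j y < (F i t) ^ (w (j : Fin n) / w i)}) := by
          ext z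
          simp only [Set.mem_preimage, Set.mem_inter_iff, Set.mem_prod, Set.mem_univ, and_true,
            ht, true_and, hC, Set.mem_setOf_eq, Set.mem_univ_pi]
          refine forall_congr' fun j => ?_
          have hrw : ((F i t) ^ (1 / w i)) ^ (w (j : Fin n))
              = (F i t) ^ (w (j : Fin n) / w i) := by
            rw [← Real.rpow_mul (hFpos i t).le, one_div, inv_mul_eq_div]
          rw [one_div (w (j : Fin n)),
            Real.rpow_inv_lt_iff_of_pos (hFpos _ _).le
              (Real.rpow_nonneg (hFpos i t).le _) (hw _), hrw]
        rw [h1, Measure.pi_pi]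
        have h2 : ∀ j : T, ν j {y | F j y < (F i t) ^ (w (j : Fin n) / w i)}
            = ENNReal.ofReal ((F i t) ^ (w (j : Fin n) / w i)) := by
          intro j
          have hcj0 : 0 < (F i t) ^ (w (j : Fin n) / w i) :=
            Real.rpow_pos_of_pos (hFpos i t) _
          have hcj1 : (F i t) ^ (w (j : Fin n) / w i) < 1 :=
            Real.rpow_lt_one (hFpos i t).le (hFlt1 i t) (div_pos (hw _) hwi)
          rw [hν, Measure.map_apply (hγmeas _)
            (measurableSet_lt (hFcont _).measurable measurable_const)]
          exact auxCDF_unif_lt μ (hγmeas _) (hFmono _) (hFcont _) (hcdf _) hcj0 hcj1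
        calc ∏ j : T, ν j {y | F j y < (F i t) ^ (w (j : Fin n) / w i)}
            = ∏ j : T, ENNReal.ofReal ((F i t) ^ (w (j : Fin n) / w i)) :=
              Finset.prod_congr rfl fun j _ => h2 j
          _ = ENNReal.ofReal (∏ j : T, (F i t) ^ (w (j : Fin n) / w i)) :=
              (ENNReal.ofReal_prod_of_nonneg fun j _ =>
                (Real.rpow_pos_of_pos (hFpos i t) _).le).symm
          _ = ENNReal.ofReal ((F i t) ^ (s - 1)) := by
              congr 1
              rw [← Real.rpow_sum_of_pos (hFpos i t)]
              congr 1
              rw [← Finset.sum_div, Finset.sum_coe_sort T w]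
              have : ∑ j ∈ T, w j = (∑ j, w j) - w i := by
                have h := Finset.sum_compl_add_sum ({i} : Finset (Fin n)) w
                rw [Finset.sum_singleton] at h
                rw [hT]
                linarith
              rw [this, hs_def]
              field_simp
      · rw [Set.indicator_of_notMem ht]
        have h1 : Prod.mk t ⁻¹' ((D ×ˢ Set.univ) ∩ C) = ∅ := by
          ext z
          simp only [Set.mem_preimage, Set.mem_inter_iff, Set.mem_prod, Set.mem_univ, and_true,
            Set.mem_empty_iff_false, iff_false, not_and, ht, false_and, false_implies,
            not_false_iff]
        rw [h1, measure_empty]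
    rw [lintegral_congr hslice]
    set H : ℝ → ENNReal :=
      Set.indicator (Set.Iic c) (fun u => ENNReal.ofReal (u ^ (s - 1))) with hH
    have hHmeas : Measurable H :=
      Measurable.indicator (Measurable.ennreal_ofReal (measurable_id.pow measurable_const))
        measurableSet_Iic
    have hind : ∀ t : ℝ, Set.indicator D (fun t => ENNReal.ofReal ((F i t) ^ (s - 1))) t
        = H (F i t) := by
      intro t
      by_cases ht : t ∈ D
      · rw [Set.indicator_of_mem ht, hH]
        exact (Set.indicator_of_mem (show F i t ∈ Set.Iic c from (hDc t).1 ht)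
          (fun u => ENNReal.ofReal (u ^ (s - 1)))).symm
      · rw [Set.indicator_of_notMem ht, hH]
        exact (Set.indicator_of_notMem
          (show F i t ∉ Set.Iic c from fun hmem => ht ((hDc t).2 hmem))
          (fun u => ENNReal.ofReal (u ^ (s - 1)))).symm
    calc ∫⁻ t, Set.indicator D (fun t => ENNReal.ofReal ((F i t) ^ (s - 1))) t ∂(ν i)
        = ∫⁻ t, H (F i t) ∂(ν i) := lintegral_congr hind
      _ = ∫⁻ ω, H (F i (γ i ω)) ∂μ := by
          rw [hν, lintegral_map (show Measurable fun t => H (F i t) from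
            hHmeas.comp (hFcont i).measurable) (hγmeas i)]
      _ = ∫⁻ u, H u ∂(μ.map (fun ω => F i (γ i ω))) := by
          rw [lintegral_map hHmeas (show Measurable fun ω => F i (γ i ω) from
            (hFcont i).measurable.comp (hγmeas i))]
      _ = ∫⁻ u, H u ∂(volume.restrict (Set.Ioo (0 : ℝ) 1)) := by
          rw [auxCDF_map μ (hγmeas i) (hFmono i) (hFcont i) (hF01 i) (hcdf i)]
      _ = ENNReal.ofReal (c ^ s / s) := by
          rw [hH, lintegral_indicator measurableSet_Iic,
            Measure.restrict_restrict measurableSet_Iic]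
          exact auxIntegral hs_pos hc hc1
  -- put the pieces together
  have hABval : μ ({ω | γ i ω ≤ x} ∩
      {ω | ∀ j, j ≠ i → (F j (γ j ω)) ^ (1 / w j) < (F i (γ i ω)) ^ (1 / w i)})
      = ENNReal.ofReal ((F i x) ^ s / s) := by
    rw [hA', hB, ← Set.preimage_inter]
    exact master (Set.Iic x) (F i x) measurableSet_Iic (hFpos i x) (hFlt1 i x).le
      (fun t => ⟨fun ht => (hFmono i).le_iff_le.2 ht, fun ht => (hFmono i).le_iff_le.1 ht⟩)
  have hBval : μ {ω | ∀ j, j ≠ i → (F j (γ j ω)) ^ (1 / w j) < (F i (γ i ω)) ^ (1 / w i)}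
      = ENNReal.ofReal (1 / s) := by
    rw [hB]
    have : C = (Set.univ ×ˢ Set.univ) ∩ C := by
      rw [Set.univ_prod_univ, Set.univ_inter]
    rw [this]
    have h := master Set.univ 1 MeasurableSet.univ one_pos le_rfl
      (fun t => ⟨fun _ => (hFlt1 i t).le, fun _ => Set.mem_univ t⟩)
    rw [h, Real.one_rpow]
  rw [hABval, hBval, ← ENNReal.ofReal_div_of_pos (by positivity : (0 : ℝ) < 1 / s)]
  congr 1
  rw [hsinv]
  field_simp
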